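/- Let G be the 4-cycle on vertices a, b, c, d, with edge ideal I = (ab, bc, cd, da), and let t ≥ 1. Then the minimal generating set of I^t is exactly { m(i,j) := a^i b^j c^{t-i} d^{t-j} : 0 ≤ i ≤ t, 0 ≤ j ≤ t }, which has (t+1)^2 elements. A two-element set {m(i,j), m(i',j')} of distinct minimal generators is a Scarf face of I^t if and only if (|i - i'| = 1 and j = j') or (i = i' and |j - j'| = 1); moreover no Scarf face of I^t has more than two elements. Thus Scarf(I^t) is the 1-dimensional t × t grid complex (in particular, for t = 1 it is a 4-cycle). -/

import Mathlib

/-- The monomial (exponent vector) of an edge: `1` on its endpoints, `0` elsewhere. -/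
def edgeMon {V : Type*} [DecidableEq V] (e : Sym2 V) : V → ℕ :=
  fun x => if x ∈ e then 1 else 0

/-- The lcm (componentwise max) of the monomials of a finite set of edges. -/
def eLcm {V : Type*} [DecidableEq V] (σ : Finset (Sym2 V)) : V → ℕ :=
  σ.sup edgeMon

/-- `σ` is a Scarf face of the edge ideal `I(G)`, identified with a set of edges of `G`:
its lcm is distinct from the lcm of any other set of edges of `G`. -/
def IsScarf {V : Type*} [DecidableEq V] (G : SimpleGraph V) (σ : Finset (Sym2 V)) : Prop :=
  (∀ e ∈ σ, e ∈ G.edgeSet) ∧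
    ∀ τ : Finset (Sym2 V), (∀ e ∈ τ, e ∈ G.edgeSet) → eLcm τ = eLcm σ → τ = σ

/-- `dist_G(e, f) = 0`: the two edges share a vertex. -/
def Dist0 {V : Type*} (e f : Sym2 V) : Prop := ∃ x, x ∈ e ∧ x ∈ f

/-- `dist_G(e, f) = 1`: the edges are vertex-disjoint, but some endpoint of `e` is
adjacent in `G` to some endpoint of `f`. -/
def Dist1 {V : Type*} (G : SimpleGraph V) (e f : Sym2 V) : Prop :=
  ¬ Dist0 e f ∧ ∃ x ∈ e, ∃ y ∈ f, G.Adj x y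

/-- Componentwise lcm (sup) of a finite set of exponent vectors. -/
def mLcm {V : Type*} (σ : Finset (V → ℕ)) : V → ℕ := σ.sup id

/-- `m` is a sum of `t` edge monomials of `G`, i.e. a generator of `I(G)^t`. -/
def IsEdgeSum {V : Type*} [DecidableEq V] (G : SimpleGraph V) (t : ℕ) (m : V → ℕ) : Prop :=
  ∃ s : Multiset (Sym2 V), (∀ e ∈ s, e ∈ G.edgeSet) ∧ Multiset.card s = t ∧
    (s.map edgeMon).sum = m

/-- `m` is a minimal generator of `I(G)^t`: it is a sum of `t` edge monomials of `G`,
minimal with respect to componentwise `≤` among all such sums. -/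
def IsMinGen {V : Type*} [DecidableEq V] (G : SimpleGraph V) (t : ℕ) (m : V → ℕ) : Prop :=
  IsEdgeSum G t m ∧ ∀ m', IsEdgeSum G t m' → m' ≤ m → m' = m

/-- `σ` is a Scarf face of `I(G)^t`: a set of minimal generators of `I(G)^t` whose lcm
is distinct from the lcm of any other set of minimal generators of `I(G)^t`. -/
def IsScarfPow {V : Type*} [DecidableEq V] (G : SimpleGraph V) (t : ℕ)
    (σ : Finset (V → ℕ)) : Prop :=
  (∀ m ∈ σ, IsMinGen G t m) ∧
    ∀ τ : Finset (V → ℕ), (∀ m ∈ τ, IsMinGen G t m) → mLcm τ = mLcm σ → τ = σ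

/-- The 4-cycle on vertices `a = 0`, `b = 1`, `c = 2`, `d = 3`. -/
def squareG : SimpleGraph (Fin 4) :=
  SimpleGraph.fromEdgeSet {s(0, 1), s(1, 2), s(2, 3), s(3, 0)}

lemma sq_edge (e : Sym2 (Fin 4)) : e ∈ squareG.edgeSet ↔ e = s(0,1) ∨ e = s(1,2) ∨ e = s(2,3) ∨ e = s(3,0) := by
  induction e using Sym2.ind with
  | _ x y =>
    rw [SimpleGraph.mem_edgeSet]
    show (SimpleGraph.fromEdgeSet _).Adj x y ↔ _
    rw [SimpleGraph.fromEdgeSet_adj]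
    fin_cases x <;> fin_cases y <;> decide

lemma msum_apply (s : Multiset (Sym2 (Fin 4))) (x : Fin 4) :
    (s.map edgeMon).sum x = (s.map (fun e => edgeMon e x)).sum := by
  induction s using Multiset.induction with
  | empty => simp
  | cons a s ih => simp_all [Pi.add_apply]

lemma mLcm_apply (σ : Finset (Fin 4 → ℕ)) (x : Fin 4) : mLcm σ x = σ.sup (fun m => m x) := by
  rw [mLcm, Finset.sup_apply]; rfl

example (a b : ℕ) : a ⊔ b = max a b := rfl

lemma invariant {t : ℕ} {m : Fin 4 → ℕ} (h : IsEdgeSum squareG t m) :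
    m 0 + m 2 = t ∧ m 1 + m 3 = t := by
  obtain ⟨s, hs, hc, rfl⟩ := h
  rw [msum_apply, msum_apply, msum_apply, msum_apply, ← Multiset.sum_map_add, ← Multiset.sum_map_add]
  constructor
  · rw [Multiset.map_congr rfl (fun e he => ?_), Multiset.map_const', Multiset.sum_replicate,
      smul_eq_mul, mul_one, hc]
    rcases (sq_edge e).1 (hs e he) with h|h|h|h <;> subst h <;> decide
  · rw [Multiset.map_congr rfl (fun e he => ?_), Multiset.map_const', Multiset.sum_replicate,
      smul_eq_mul, mul_one, hc]
    rcases (sq_edge e).1 (hs e he) with h|h|h|h <;> subst h <;> decide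
lemma construct (t i j : ℕ) (hi : i ≤ t) (hj : j ≤ t) :
    IsEdgeSum squareG t ![i, j, t - i, t - j] := by
  refine ⟨Multiset.replicate (i+j-t) s(0,1) + Multiset.replicate (j-(i+j-t)) s(1,2)
    + Multiset.replicate (t-i-j) s(2,3) + Multiset.replicate (i-(i+j-t)) s(3,0), ?_, ?_, ?_⟩
  · intro e he
    simp only [Multiset.mem_add] at he
    rw [sq_edge]
    rcases he with ((h|h)|h)|h <;> rw [Multiset.eq_of_mem_replicate h] <;> tauto
  · simp only [Multiset.card_add, Multiset.card_replicate]; omega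
  · funext x
    rw [msum_apply]
    simp only [Multiset.map_add, Multiset.map_replicate, Multiset.sum_add,
      Multiset.sum_replicate, smul_eq_mul]
    fin_cases x <;> simp [edgeMon] <;> omega
lemma incomp {t : ℕ} {m m' : Fin 4 → ℕ} (h : IsEdgeSum squareG t m)
    (h' : IsEdgeSum squareG t m') (hle : m' ≤ m) : m' = m := by
  obtain ⟨h02, h13⟩ := invariant h
  obtain ⟨h02', h13'⟩ := invariant h'
  have l0 : m' 0 ≤ m 0 := hle 0
  have l1 : m' 1 ≤ m 1 := hle 1
  have l2 : m' 2 ≤ m 2 := hle 2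
  have l3 : m' 3 ≤ m 3 := hle 3
  funext x
  fin_cases x
  · show m' 0 = m 0; omega
  · show m' 1 = m 1; omega
  · show m' 2 = m 2; omega
  · show m' 3 = m 3; omega

lemma minGen_iff (t : ℕ) (m : Fin 4 → ℕ) :
    IsMinGen squareG t m ↔ ∃ i j : ℕ, i ≤ t ∧ j ≤ t ∧ m = ![i, j, t - i, t - j] := by
  constructor
  · rintro ⟨h, -⟩
    obtain ⟨h02, h13⟩ := invariant h
    refine ⟨m 0, m 1, by omega, by omega, ?_⟩
    have e2 : t - m 0 = m 2 := by omega
    have e3 : t - m 1 = m 3 := by omega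
    rw [e2, e3]
    funext x; fin_cases x <;> rfl
  · rintro ⟨i, j, hi, hj, rfl⟩
    exact ⟨construct t i j hi hj, fun m' h' hle => incomp (construct t i j hi hj) h' hle⟩
abbrev mg (t i j : ℕ) : Fin 4 → ℕ := ![i, j, t - i, t - j]

lemma mg_inj {t i j i' j' : ℕ} (h : mg t i j = mg t i' j') : i = i' ∧ j = j' :=
  ⟨congrFun h 0, congrFun h 1⟩

lemma mg_ne {t i j i' j' : ℕ} (h : ¬(i = i' ∧ j = j')) : mg t i j ≠ mg t i' j' :=
  fun he => h (mg_inj he)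

lemma mLcm_pair (f g : Fin 4 → ℕ) (x : Fin 4) : mLcm {f, g} x = max (f x) (g x) := by
  rw [mLcm_apply]
  simp [Finset.sup_insert, Finset.sup_singleton]

lemma mem_le_lcm {τ : Finset (Fin 4 → ℕ)} {m : Fin 4 → ℕ} (hm : m ∈ τ) (x : Fin 4) :
    m x ≤ mLcm τ x := by
  rw [mLcm_apply]; exact Finset.le_sup (f := fun m => m x) hm

lemma exists_sup (τ : Finset (Fin 4 → ℕ)) (hne : τ.Nonempty) (x : Fin 4) :
    ∃ m ∈ τ, m x = mLcm τ x := by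
  obtain ⟨m, hm, he⟩ := Finset.exists_mem_eq_sup τ hne (fun m => m x)
  exact ⟨m, hm, by rw [mLcm_apply, he]⟩

lemma scarf_horiz (t a b : ℕ) (ha : a + 1 ≤ t) (hb : b ≤ t) :
    IsScarfPow squareG t {mg t a b, mg t (a+1) b} := by
  have hgen : ∀ u v : ℕ, u ≤ t → v ≤ t → IsMinGen squareG t (mg t u v) := fun u v hu hv =>
    (minGen_iff t _).2 ⟨u, v, hu, hv, rfl⟩
  constructor
  · intro m hm
    rcases Finset.mem_insert.1 hm with h|h
    · rw [h]; exact hgen a b (by omega) hb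
    · rw [Finset.mem_singleton.1 h]; exact hgen (a+1) b ha hb
  · intro τ hτ hlcm
    have hLv : ∀ x, mLcm τ x = (![a+1, b, t-a, t-b] : Fin 4 → ℕ) x := by
      intro x
      rw [hlcm, mLcm_pair]
      fin_cases x <;> simp <;> omega
    have hτsub : ∀ m ∈ τ, m = mg t a b ∨ m = mg t (a+1) b := by
      intro m hm
      obtain ⟨u, v, hu, hv, rfl⟩ := (minGen_iff t m).1 (hτ m hm)
      have k0 : u ≤ a + 1 := by have := mem_le_lcm hm 0; rw [hLv 0] at this; simpa using this
      have k1 : v ≤ b := by have := mem_le_lcm hm 1; rw [hLv 1] at this; simpa using this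
      have k2 : t - u ≤ t - a := by
        have := mem_le_lcm hm 2; rw [hLv 2] at this; simpa using this
      have k3 : t - v ≤ t - b := by
        have := mem_le_lcm hm 3; rw [hLv 3] at this; simpa using this
      have hv' : v = b := by omega
      have hu' : u = a ∨ u = a + 1 := by omega
      rcases hu' with h|h <;> [left; right] <;> rw [h, hv']
    have hne : τ.Nonempty := by
      rcases τ.eq_empty_or_nonempty with h|h
      · exfalso
        have := hLv 0
        rw [h] at this
        simp [mLcm_apply] at this
      · exact h
    obtain ⟨m1, hm1, hv1⟩ := exists_sup τ hne 0
    obtain ⟨m2, hm2, hv2⟩ := exists_sup τ hne 2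
    have e1 : m1 = mg t (a+1) b := by
      rcases hτsub m1 hm1 with h|h
      · exfalso; rw [hLv 0, h] at hv1; simp at hv1
      · exact h
    have e2 : m2 = mg t a b := by
      rcases hτsub m2 hm2 with h|h
      · exact h
      · exfalso; rw [hLv 2, h] at hv2; simp at hv2; omega
    apply Finset.Subset.antisymm
    · intro m hm
      rcases hτsub m hm with h|h <;> simp [h]
    · intro m hm
      rcases Finset.mem_insert.1 hm with h|h
      · rw [h, ← e2]; exact hm2
      · rw [Finset.mem_singleton.1 h, ← e1]; exact hm1
lemma scarf_vert (t a b : ℕ) (ha : a ≤ t) (hb : b + 1 ≤ t) :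
    IsScarfPow squareG t {mg t a b, mg t a (b+1)} := by
  have hgen : ∀ u v : ℕ, u ≤ t → v ≤ t → IsMinGen squareG t (mg t u v) := fun u v hu hv =>
    (minGen_iff t _).2 ⟨u, v, hu, hv, rfl⟩
  constructor
  · intro m hm
    rcases Finset.mem_insert.1 hm with h|h
    · rw [h]; exact hgen a b ha (by omega)
    · rw [Finset.mem_singleton.1 h]; exact hgen a (b+1) ha hb
  · intro τ hτ hlcm
    have hLv : ∀ x, mLcm τ x = (![a, b+1, t-a, t-b] : Fin 4 → ℕ) x := by
      intro x
      rw [hlcm, mLcm_pair]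
      fin_cases x <;> simp <;> omega
    have hτsub : ∀ m ∈ τ, m = mg t a b ∨ m = mg t a (b+1) := by
      intro m hm
      obtain ⟨u, v, hu, hv, rfl⟩ := (minGen_iff t m).1 (hτ m hm)
      have k0 : u ≤ a := by have := mem_le_lcm hm 0; rw [hLv 0] at this; simpa using this
      have k1 : v ≤ b + 1 := by have := mem_le_lcm hm 1; rw [hLv 1] at this; simpa using this
      have k2 : t - u ≤ t - a := by
        have := mem_le_lcm hm 2; rw [hLv 2] at this; simpa using this
      have k3 : t - v ≤ t - b := by
        have := mem_le_lcm hm 3; rw [hLv 3] at this; simpa using this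
      have hu' : u = a := by omega
      have hv' : v = b ∨ v = b + 1 := by omega
      rcases hv' with h|h <;> [left; right] <;> rw [h, hu']
    have hne : τ.Nonempty := by
      rcases τ.eq_empty_or_nonempty with h|h
      · exfalso
        have := hLv 1
        rw [h] at this
        simp [mLcm_apply] at this
      · exact h
    obtain ⟨m1, hm1, hv1⟩ := exists_sup τ hne 1
    obtain ⟨m2, hm2, hv2⟩ := exists_sup τ hne 3
    have e1 : m1 = mg t a (b+1) := by
      rcases hτsub m1 hm1 with h|h
      · exfalso; rw [hLv 1, h] at hv1; simp at hv1
      · exact h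
    have e2 : m2 = mg t a b := by
      rcases hτsub m2 hm2 with h|h
      · exact h
      · exfalso; rw [hLv 3, h] at hv2; simp at hv2; omega
    apply Finset.Subset.antisymm
    · intro m hm
      rcases hτsub m hm with h|h <;> simp [h]
    · intro m hm
      rcases Finset.mem_insert.1 hm with h|h
      · rw [h, ← e2]; exact hm2
      · rw [Finset.mem_singleton.1 h, ← e1]; exact hm1

lemma mLcm_three (f g h : Fin 4 → ℕ) (x : Fin 4) :
    mLcm {f, g, h} x = max (f x) (max (g x) (h x)) := by
  rw [mLcm_apply]
  simp [Finset.sup_insert, Finset.sup_singleton]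

lemma mLcm_four (f g h k : Fin 4 → ℕ) (x : Fin 4) :
    mLcm {f, g, h, k} x = max (f x) (max (g x) (max (h x) (k x))) := by
  rw [mLcm_apply]
  simp [Finset.sup_insert, Finset.sup_singleton]

lemma scarf_card (t : ℕ) (σ : Finset (Fin 4 → ℕ)) (h : IsScarfPow squareG t σ) : σ.card ≤ 2 := by
  rcases σ.eq_empty_or_nonempty with he|hne
  · simp [he]
  have hform : ∀ m ∈ σ, m 2 = t - m 0 ∧ m 3 = t - m 1 ∧ m 0 ≤ t ∧ m 1 ≤ t := by
    intro m hm
    obtain ⟨u, v, hu, hv, rfl⟩ := (minGen_iff t m).1 (h.1 m hm)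
    refine ⟨by simp, by simp, by simpa using hu, by simpa using hv⟩
  obtain ⟨mA, hmA, hmAv⟩ := Finset.exists_mem_eq_sup' hne (fun m => m 0)
  obtain ⟨ma, hma, hmav⟩ := Finset.exists_mem_eq_inf' hne (fun m => m 0)
  obtain ⟨mB, hmB, hmBv⟩ := Finset.exists_mem_eq_sup' hne (fun m => m 1)
  obtain ⟨mb, hmb, hmbv⟩ := Finset.exists_mem_eq_inf' hne (fun m => m 1)
  have hAt : mA 0 ≤ t := (hform mA hmA).2.2.1
  have hBt : mB 1 ≤ t := (hform mB hmB).2.2.2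
  have haA : ma 0 ≤ mA 0 := by
    have := Finset.inf'_le (fun m => m 0) hmA; rwa [hmav] at this
  have hbB : mb 1 ≤ mB 1 := by
    have := Finset.inf'_le (fun m => m 1) hmB; rwa [hmbv] at this
  have hat : ma 0 ≤ t := le_trans haA hAt
  have hbt : mb 1 ≤ t := le_trans hbB hBt
  have hbnd : ∀ m ∈ σ, ma 0 ≤ m 0 ∧ mb 1 ≤ m 1 ∧ m 0 ≤ mA 0 ∧ m 1 ≤ mB 1 := by
    intro m hm
    refine ⟨?_, ?_, ?_, ?_⟩
    · rw [← hmav]; exact Finset.inf'_le (fun m => m 0) hm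
    · rw [← hmbv]; exact Finset.inf'_le (fun m => m 1) hm
    · rw [← hmAv]; exact Finset.le_sup' (fun m => m 0) hm
    · rw [← hmBv]; exact Finset.le_sup' (fun m => m 1) hm
  have hσL : mLcm σ = ![mA 0, mB 1, t - ma 0, t - mb 1] := by
    funext x
    fin_cases x
    · show mLcm σ 0 = mA 0
      rw [mLcm_apply, ← Finset.sup'_eq_sup hne, hmAv]
    · show mLcm σ 1 = mB 1
      rw [mLcm_apply, ← Finset.sup'_eq_sup hne, hmBv]
    · show mLcm σ 2 = t - ma 0
      rw [mLcm_apply]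
      apply le_antisymm
      · apply Finset.sup_le
        intro m hm
        have h2 := (hform m hm).1
        have h0 := (hbnd m hm).1
        show m 2 ≤ t - ma 0
        clear * - h2 h0
        omega
      · calc t - ma 0 = ma 2 := ((hform ma hma).1).symm
        _ ≤ _ := Finset.le_sup (f := fun m => m 2) hma
    · show mLcm σ 3 = t - mb 1
      rw [mLcm_apply]
      apply le_antisymm
      · apply Finset.sup_le
        intro m hm
        have h2 := (hform m hm).2.1
        have h0 := (hbnd m hm).2.1
        show m 3 ≤ t - mb 1
        clear * - h2 h0
        omega
      · calc t - mb 1 = mb 3 := ((hform mb hmb).2.1).symm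
        _ ≤ _ := Finset.le_sup (f := fun m => m 3) hmb
  have hτσ : ({mg t (ma 0) (mb 1), mg t (mA 0) (mB 1)} : Finset (Fin 4 → ℕ)) = σ := by
    apply h.2
    · intro m hm
      rcases Finset.mem_insert.1 hm with hh|hh
      · rw [hh]; exact (minGen_iff t _).2 ⟨ma 0, mb 1, hat, hbt, rfl⟩
      · rw [Finset.mem_singleton.1 hh]; exact (minGen_iff t _).2 ⟨mA 0, mB 1, hAt, hBt, rfl⟩
    · rw [hσL]
      funext x
      rw [mLcm_pair]
      fin_cases x
      · show max (ma 0) (mA 0) = mA 0; clear * - haA; omega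
      · show max (mb 1) (mB 1) = mB 1; clear * - hbB; omega
      · show max (t - ma 0) (t - mA 0) = t - ma 0; clear * - haA; omega
      · show max (t - mb 1) (t - mB 1) = t - mb 1; clear * - hbB; omega
  calc σ.card = ({mg t (ma 0) (mb 1), mg t (mA 0) (mB 1)} : Finset (Fin 4 → ℕ)).card := by
        rw [hτσ]
  _ ≤ 2 := by
      apply le_trans (Finset.card_insert_le _ _)
      simp
lemma not_scarf (t i j i' j' : ℕ) (hi : i ≤ t) (hj : j ≤ t) (hi' : i' ≤ t) (hj' : j' ≤ t)
    (hne : ¬(i = i' ∧ j = j'))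
    (hnadj : ¬(((i = i' + 1 ∨ i' = i + 1) ∧ j = j') ∨ (i = i' ∧ (j = j' + 1 ∨ j' = j + 1)))) :
    ¬ IsScarfPow squareG t {mg t i j, mg t i' j'} := by
  intro hS
  have hgen : ∀ u v : ℕ, u ≤ t → v ≤ t → IsMinGen squareG t (mg t u v) := fun u v hu hv =>
    (minGen_iff t _).2 ⟨u, v, hu, hv, rfl⟩
  have hcσ : ({mg t i j, mg t i' j'} : Finset (Fin 4 → ℕ)).card = 2 :=
    Finset.card_pair (mg_ne hne)
  have hcase : (i ≠ i' ∧ j ≠ j') ∨ (j = j' ∧ min i i' + 2 ≤ max i i') ∨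
      (i = i' ∧ min j j' + 2 ≤ max j j') := by
    clear hS hgen hcσ
    omega
  rcases hcase with ⟨h1, h2⟩|⟨h1, h2⟩|⟨h1, h2⟩
  · set mn := min i i' with hmn
    set mx := max i i' with hmx
    set nn := min j j' with hnn
    set nx := max j j' with hnx
    have key : ({mg t mn nn, mg t mn nx, mg t mx nn, mg t mx nx} : Finset (Fin 4 → ℕ))
        = {mg t i j, mg t i' j'} := by
      apply hS.2
      · intro m hm
        simp only [Finset.mem_insert, Finset.mem_singleton] at hm
        rcases hm with h|h|h|h <;> rw [h] <;> apply hgen <;> omega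
      · funext x
        rw [mLcm_four, mLcm_pair]
        fin_cases x
        · show max mn (max mn (max mx mx)) = max i i'
          omega
        · show max nn (max nx (max nn nx)) = max j j'
          omega
        · show max (t - mn) (max (t - mn) (max (t - mx) (t - mx))) = max (t - i) (t - i')
          omega
        · show max (t - nn) (max (t - nx) (max (t - nn) (t - nx))) = max (t - j) (t - j')
          omega
    have hc4 : ({mg t mn nn, mg t mn nx, mg t mx nn, mg t mx nx} : Finset (Fin 4 → ℕ)).card
        = 4 := by
      rw [Finset.card_insert_of_notMem (by
            simp only [Finset.mem_insert, Finset.mem_singleton]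
            push_neg
            exact ⟨mg_ne (by omega), mg_ne (by omega), mg_ne (by omega)⟩),
          Finset.card_insert_of_notMem (by
            simp only [Finset.mem_insert, Finset.mem_singleton]
            push_neg
            exact ⟨mg_ne (by omega), mg_ne (by omega)⟩),
          Finset.card_pair (mg_ne (by omega))]
    rw [key, hcσ] at hc4
    exact absurd hc4 (by omega)
  · set mn := min i i' with hmn
    set mx := max i i' with hmx
    have key : ({mg t mn j, mg t (mn+1) j, mg t mx j} : Finset (Fin 4 → ℕ))
        = {mg t i j, mg t i' j'} := by
      apply hS.2
      · intro m hm
        simp only [Finset.mem_insert, Finset.mem_singleton] at hm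
        rcases hm with h|h|h <;> rw [h] <;> apply hgen <;> omega
      · funext x
        rw [mLcm_three, mLcm_pair]
        fin_cases x
        · show max mn (max (mn+1) mx) = max i i'
          omega
        · show max j (max j j) = max j j'
          omega
        · show max (t - mn) (max (t - (mn+1)) (t - mx)) = max (t - i) (t - i')
          omega
        · show max (t - j) (max (t - j) (t - j)) = max (t - j) (t - j')
          omega
    have hc3 : ({mg t mn j, mg t (mn+1) j, mg t mx j} : Finset (Fin 4 → ℕ)).card = 3 := by
      rw [Finset.card_insert_of_notMem (by
            simp only [Finset.mem_insert, Finset.mem_singleton]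
            push_neg
            exact ⟨mg_ne (by omega), mg_ne (by omega)⟩),
          Finset.card_pair (mg_ne (by omega))]
    rw [key, hcσ] at hc3
    exact absurd hc3 (by omega)
  · set nn := min j j' with hnn
    set nx := max j j' with hnx
    have key : ({mg t i nn, mg t i (nn+1), mg t i nx} : Finset (Fin 4 → ℕ))
        = {mg t i j, mg t i' j'} := by
      apply hS.2
      · intro m hm
        simp only [Finset.mem_insert, Finset.mem_singleton] at hm
        rcases hm with h|h|h <;> rw [h] <;> apply hgen <;> omega
      · funext x
        rw [mLcm_three, mLcm_pair]
        fin_cases x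
        · show max i (max i i) = max i i'
          omega
        · show max nn (max (nn+1) nx) = max j j'
          omega
        · show max (t - i) (max (t - i) (t - i)) = max (t - i) (t - i')
          omega
        · show max (t - nn) (max (t - (nn+1)) (t - nx)) = max (t - j) (t - j')
          omega
    have hc3 : ({mg t i nn, mg t i (nn+1), mg t i nx} : Finset (Fin 4 → ℕ)).card = 3 := by
      rw [Finset.card_insert_of_notMem (by
            simp only [Finset.mem_insert, Finset.mem_singleton]
            push_neg
            exact ⟨mg_ne (by omega), mg_ne (by omega)⟩),
          Finset.card_pair (mg_ne (by omega))]
    rw [key, hcσ] at hc3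
    exact absurd hc3 (by omega)
theorem stmt19 (t : ℕ) (ht : 1 ≤ t) :
    (∀ m : Fin 4 → ℕ, IsMinGen squareG t m ↔
        ∃ i j : ℕ, i ≤ t ∧ j ≤ t ∧ m = ![i, j, t - i, t - j]) ∧
    {m : Fin 4 → ℕ | IsMinGen squareG t m}.ncard = (t + 1) ^ 2 ∧
    (∀ i j i' j' : ℕ, i ≤ t → j ≤ t → i' ≤ t → j' ≤ t → (i, j) ≠ (i', j') →
        (IsScarfPow squareG t {![i, j, t - i, t - j], ![i', j', t - i', t - j']} ↔
          (((i = i' + 1 ∨ i' = i + 1) ∧ j = j') ∨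
            (i = i' ∧ (j = j' + 1 ∨ j' = j + 1))))) ∧
    (∀ σ : Finset (Fin 4 → ℕ), IsScarfPow squareG t σ → σ.card ≤ 2) := by
  refine ⟨minGen_iff t, ?_, ?_, fun σ h => scarf_card t σ h⟩
  · have hset : {m : Fin 4 → ℕ | IsMinGen squareG t m} =
        ↑((Finset.range (t+1) ×ˢ Finset.range (t+1)).image
          (fun p : ℕ × ℕ => (![p.1, p.2, t - p.1, t - p.2] : Fin 4 → ℕ))) := by
      ext m
      simp only [Set.mem_setOf_eq, minGen_iff, Finset.coe_image, Set.mem_image,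
        Finset.mem_coe, Finset.mem_product, Finset.mem_range, Nat.lt_succ_iff]
      constructor
      · rintro ⟨i, j, hi, hj, rfl⟩
        exact ⟨(i, j), ⟨hi, hj⟩, rfl⟩
      · rintro ⟨⟨i, j⟩, ⟨hi, hj⟩, rfl⟩
        exact ⟨i, j, hi, hj, rfl⟩
    rw [hset, Set.ncard_coe_finset, Finset.card_image_of_injOn, Finset.card_product,
      Finset.card_range]
    · ring
    · intro p _ q _ hpq
      obtain ⟨h1, h2⟩ := mg_inj hpq
      exact Prod.ext h1 h2
  · intro i j i' j' hi hj hi' hj' hne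
    have hne' : ¬(i = i' ∧ j = j') := by
      rintro ⟨rfl, rfl⟩; exact hne rfl
    constructor
    · intro hS
      by_contra hnadj
      exact not_scarf t i j i' j' hi hj hi' hj' hne' hnadj hS
    · rintro (⟨h1 | h1, h2⟩ | ⟨h1, h2 | h2⟩)
      · subst h1; subst h2
        rw [Finset.pair_comm]
        exact scarf_horiz t i' j (by omega) hj
      · subst h1; subst h2
        exact scarf_horiz t i j (by omega) hj
      · subst h1; subst h2
        rw [Finset.pair_comm]
        exact scarf_vert t i j' hi (by omega)
      · subst h1; subst h2
        exact scarf_vert t i j hi (by omega)
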